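/- (Negative definiteness of the multiplier response matrix) Let D ⊆ ℝᴹ be open, let F : ℝⁿ → ℝ and c : ℝⁿ → ℝᴹ be twice continuously differentiable, let v* : D → ℝⁿ and Λ : D → ℝᴹ be continuously differentiable with c(v*(x)) = x and ∇F(v*(x)) = Σₘ Λₘ(x)·∇cᵐ(v*(x)) for all x ∈ D. Fix x ∈ D and suppose the n×n matrix Hess F(v*(x)) − Σₘ Λₘ(x)·Hess cᵐ(v*(x)) is negative definite. Then the M×M matrix J with entries Jᵢⱼ = ∂Λᵢ/∂xʲ(x) is negative definite: ρᵀJρ < 0 for every nonzero ρ ∈ ℝᴹ. -/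

import Mathlib

private lemma aux_d2 {n : ℕ} (f : (Fin n → ℝ) → ℝ) (hf : ContDiff ℝ 2 f) (u p : Fin n → ℝ) :
    HasFDerivAt (fun v => fderiv ℝ f v u)
      ((ContinuousLinearMap.apply ℝ ℝ u).comp (fderiv ℝ (fderiv ℝ f) p)) p := by
  have h1 : ContDiff ℝ 1 (fderiv ℝ f) := hf.fderiv_right (by norm_num)
  exact (ContinuousLinearMap.apply ℝ ℝ u).hasFDerivAt.comp p
    ((h1.differentiable one_ne_zero).differentiableAt.hasFDerivAt)

private lemma aux_bilin {n : ℕ} (B : (Fin n → ℝ) →L[ℝ] (Fin n → ℝ) →L[ℝ] ℝ) (w : Fin n → ℝ) :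
    B w w = ∑ s, ∑ k, w s * B (Pi.single s 1) (Pi.single k 1) * w k := by
  have hw : w = ∑ s, w s • (Pi.single s 1 : Fin n → ℝ) := by ext k; simp [Pi.single_apply]
  have e1 : ∀ u, B w u = ∑ s, w s * B (Pi.single s 1) u := by
    intro u
    conv_lhs => rw [hw]
    rw [map_sum, ContinuousLinearMap.sum_apply]
    exact Finset.sum_congr rfl fun s _ => by rw [map_smul]; simp
  rw [e1]
  refine Finset.sum_congr rfl fun s _ => ?_
  have e2 : B (Pi.single s 1) w = ∑ k, B (Pi.single s 1) (Pi.single k 1) * w k := by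
    conv_lhs => rw [hw]
    rw [map_sum]
    exact Finset.sum_congr rfl fun k _ => by rw [map_smul]; simp [mul_comm]
  rw [e2, Finset.mul_sum]
  exact Finset.sum_congr rfl fun k _ => by ring

theorem stmt_9 (n M : ℕ) (D : Set (Fin M → ℝ)) (hD : IsOpen D)
    (F : (Fin n → ℝ) → ℝ) (hF : ContDiff ℝ 2 F)
    (c : (Fin n → ℝ) → (Fin M → ℝ)) (hc : ContDiff ℝ 2 c)
    (vstar : (Fin M → ℝ) → (Fin n → ℝ)) (hv : ContDiffOn ℝ 1 vstar D)
    (Λ : (Fin M → ℝ) → (Fin M → ℝ)) (hΛ : ContDiffOn ℝ 1 Λ D)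
    (hcon : ∀ x ∈ D, c (vstar x) = x)
    (hFOC : ∀ x ∈ D, fderiv ℝ F (vstar x)
        = ∑ m, Λ x m • fderiv ℝ (fun v => c v m) (vstar x))
    (x : Fin M → ℝ) (hx : x ∈ D)
    (hnd : ∀ w : Fin n → ℝ, w ≠ 0 →
      ∑ s, ∑ k, w s *
        ((fderiv ℝ (fun v => fderiv ℝ F v (Pi.single k 1)) (vstar x) (Pi.single s 1))
          - ∑ m, Λ x m *
              fderiv ℝ (fun v => fderiv ℝ (fun u => c u m) v (Pi.single k 1)) (vstar x)
                (Pi.single s 1)) * w k < 0) :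
    ∀ ρ : Fin M → ℝ, ρ ≠ 0 →
      ∑ i, ∑ j, ρ i * fderiv ℝ (fun y => Λ y i) x (Pi.single j 1) * ρ j < 0 := by
  intro ρ hρ
  have hxD : D ∈ nhds x := hD.mem_nhds hx
  have hvd : DifferentiableAt ℝ vstar x :=
    (hv.differentiableOn one_ne_zero).differentiableAt hxD
  have hΛd : DifferentiableAt ℝ Λ x :=
    (hΛ.differentiableOn one_ne_zero).differentiableAt hxD
  set A := fderiv ℝ vstar x with hA_def
  have hA : HasFDerivAt vstar A x := hvd.hasFDerivAt
  set DΛ := fderiv ℝ Λ x with hDΛ_def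
  have hDΛ : HasFDerivAt Λ DΛ x := hΛd.hasFDerivAt
  set p := vstar x with hp_def
  have hcd : DifferentiableAt ℝ c p := (hc.differentiable (by norm_num)).differentiableAt
  -- Dc(p) ∘ A = id
  have hcomp : HasFDerivAt (fun y => c (vstar y)) ((fderiv ℝ c p).comp A) x :=
    hcd.hasFDerivAt.comp x hA
  have heq : (fun y => c (vstar y)) =ᶠ[nhds x] id :=
    Filter.eventuallyEq_of_mem hxD (fun y hy => hcon y hy)
  have hid : HasFDerivAt (fun y => c (vstar y)) (ContinuousLinearMap.id ℝ (Fin M → ℝ)) x :=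
    (hasFDerivAt_id x).congr_of_eventuallyEq heq
  have hDcA : (fderiv ℝ c p).comp A = ContinuousLinearMap.id ℝ (Fin M → ℝ) :=
    hcomp.unique hid
  set w := A ρ with hw_def
  have hρw : fderiv ℝ c p w = ρ := by
    rw [hw_def]; simpa using DFunLike.congr_fun hDcA ρ
  have hwne : w ≠ 0 := by
    intro h
    exact hρ (by rw [← hρw, h, map_zero])
  -- the coordinate functions of c
  have hcm : ∀ m : Fin M, ContDiff ℝ 2 (fun v => c v m) := fun m =>
    (ContinuousLinearMap.proj m : (Fin M → ℝ) →L[ℝ] ℝ).contDiff.comp hc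
  have hcmd : ∀ m : Fin M, HasFDerivAt (fun v => c v m)
      ((ContinuousLinearMap.proj m : (Fin M → ℝ) →L[ℝ] ℝ).comp (fderiv ℝ c p)) p :=
    fun m => (ContinuousLinearMap.proj m :
      (Fin M → ℝ) →L[ℝ] ℝ).hasFDerivAt.comp p hcd.hasFDerivAt
  have hcmw : ∀ m : Fin M, fderiv ℝ (fun v => c v m) p w = ρ m := by
    intro m
    rw [(hcmd m).fderiv]
    show fderiv ℝ c p w m = ρ m
    rw [hρw]
  set D2F := fderiv ℝ (fderiv ℝ F) p with hD2F_def
  set D2c := fun m : Fin M => fderiv ℝ (fderiv ℝ (fun v => c v m)) p with hD2c_def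
  -- derivative of y ↦ DF(v*(y)) w at x
  have hL : HasFDerivAt (fun y => fderiv ℝ F (vstar y) w)
      (((ContinuousLinearMap.apply ℝ ℝ w).comp D2F).comp A) x :=
    (aux_d2 F hF w p).comp x hA
  have hΛm : ∀ m : Fin M, HasFDerivAt (fun y => Λ y m)
      ((ContinuousLinearMap.proj m : (Fin M → ℝ) →L[ℝ] ℝ).comp DΛ) x :=
    fun m => (ContinuousLinearMap.proj m : (Fin M → ℝ) →L[ℝ] ℝ).hasFDerivAt.comp x hDΛ
  have hQm : ∀ m : Fin M, HasFDerivAt (fun y => fderiv ℝ (fun v => c v m) (vstar y) w)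
      (((ContinuousLinearMap.apply ℝ ℝ w).comp (D2c m)).comp A) x :=
    fun m => (aux_d2 _ (hcm m) w p).comp x hA
  have hR : HasFDerivAt (fun y => ∑ m, Λ y m * fderiv ℝ (fun v => c v m) (vstar y) w)
      (∑ m, (Λ x m • (((ContinuousLinearMap.apply ℝ ℝ w).comp (D2c m)).comp A)
        + (fderiv ℝ (fun v => c v m) p w) •
          ((ContinuousLinearMap.proj m : (Fin M → ℝ) →L[ℝ] ℝ).comp DΛ))) x :=
    HasFDerivAt.fun_sum (fun m _ => (hΛm m).mul (hQm m))
  have hEq : (fun y => ∑ m, Λ y m * fderiv ℝ (fun v => c v m) (vstar y) w)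
      =ᶠ[nhds x] (fun y => fderiv ℝ F (vstar y) w) := by
    filter_upwards [hxD] with y hy
    rw [hFOC y hy]
    simp [ContinuousLinearMap.sum_apply]
  have hL' : HasFDerivAt (fun y => fderiv ℝ F (vstar y) w)
      (∑ m, (Λ x m • (((ContinuousLinearMap.apply ℝ ℝ w).comp (D2c m)).comp A)
        + (fderiv ℝ (fun v => c v m) p w) •
          ((ContinuousLinearMap.proj m : (Fin M → ℝ) →L[ℝ] ℝ).comp DΛ))) x :=
    hR.congr_of_eventuallyEq hEq.symm
  have hkey := (hL.unique hL')
  have hkeyρ : D2F w w = ∑ m, (Λ x m * (D2c m w w) + ρ m * (DΛ ρ m)) := by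
    have h0 := DFunLike.congr_fun hkey ρ
    simpa [ContinuousLinearMap.sum_apply, ContinuousLinearMap.add_apply,
      ContinuousLinearMap.smul_apply, smul_eq_mul, hcmw, ← hw_def] using h0
  -- rewrite the goal matrix entries
  have h1 : ∀ i j : Fin M, fderiv ℝ (fun y => Λ y i) x (Pi.single j 1)
      = DΛ (Pi.single j 1) i := by
    intro i j
    rw [(hΛm i).fderiv]
    rfl
  have hρsum : ρ = ∑ j, ρ j • (Pi.single j 1 : Fin M → ℝ) := by
    ext k; simp [Pi.single_apply]
  have hDΛρ : ∀ i : Fin M, DΛ ρ i = ∑ j, DΛ (Pi.single j 1) i * ρ j := by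
    intro i
    conv_lhs => rw [hρsum]
    rw [map_sum, Finset.sum_apply]
    refine Finset.sum_congr rfl fun j _ => ?_
    rw [map_smul]
    simp [mul_comm]
  have hgoal_eq : ∑ i, ∑ j, ρ i * fderiv ℝ (fun y => Λ y i) x (Pi.single j 1) * ρ j
      = ∑ m, ρ m * DΛ ρ m := by
    simp_rw [h1]
    refine Finset.sum_congr rfl fun i _ => ?_
    rw [hDΛρ i, Finset.mul_sum]
    refine Finset.sum_congr rfl fun j _ => ?_
    ring
  rw [hgoal_eq]
  -- identify the hnd sum with the Hessian quadratic form
  have h2F : ∀ s k : Fin n, fderiv ℝ (fun v => fderiv ℝ F v (Pi.single k 1)) p (Pi.single s 1)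
      = D2F (Pi.single s 1) (Pi.single k 1) := by
    intro s k
    rw [(aux_d2 F hF (Pi.single k 1) p).fderiv]
    rfl
  have h2c : ∀ (m : Fin M) (s k : Fin n),
      fderiv ℝ (fun v => fderiv ℝ (fun u => c u m) v (Pi.single k 1)) p (Pi.single s 1)
      = D2c m (Pi.single s 1) (Pi.single k 1) := by
    intro m s k
    rw [(aux_d2 _ (hcm m) (Pi.single k 1) p).fderiv]
    rfl
  have hnd' := hnd w hwne
  rw [show (∑ s, ∑ k, w s *
        ((fderiv ℝ (fun v => fderiv ℝ F v (Pi.single k 1)) p (Pi.single s 1))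
          - ∑ m, Λ x m *
              fderiv ℝ (fun v => fderiv ℝ (fun u => c u m) v (Pi.single k 1)) p
                (Pi.single s 1)) * w k)
      = D2F w w - ∑ m, Λ x m * (D2c m w w) from ?_] at hnd'
  · -- conclude
    have hsum : D2F w w - ∑ m, Λ x m * (D2c m w w) = ∑ m, ρ m * DΛ ρ m := by
      rw [hkeyρ, Finset.sum_add_distrib]
      ring
    linarith [hnd', hsum]
  · -- the algebraic identity
    simp_rw [h2F, h2c]
    calc ∑ s, ∑ k, w s * (D2F (Pi.single s 1) (Pi.single k 1)
            - ∑ m, Λ x m * D2c m (Pi.single s 1) (Pi.single k 1)) * w k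
        = ∑ s, ∑ k, (w s * D2F (Pi.single s 1) (Pi.single k 1) * w k
            - ∑ m, Λ x m * (w s * D2c m (Pi.single s 1) (Pi.single k 1) * w k)) := by
          refine Finset.sum_congr rfl fun s _ => Finset.sum_congr rfl fun k _ => ?_
          rw [mul_sub, sub_mul, Finset.mul_sum, Finset.sum_mul]
          congr 1
          refine Finset.sum_congr rfl fun m _ => ?_
          ring
      _ = (∑ s, ∑ k, w s * D2F (Pi.single s 1) (Pi.single k 1) * w k)
            - ∑ s, ∑ k, ∑ m, Λ x m * (w s * D2c m (Pi.single s 1) (Pi.single k 1) * w k) := by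
          simp_rw [Finset.sum_sub_distrib]
      _ = D2F w w - ∑ m, Λ x m * (D2c m w w) := by
          congr 1
          · exact (aux_bilin D2F w).symm
          · rw [Finset.sum_congr rfl fun s _ => Finset.sum_comm, Finset.sum_comm]
            refine Finset.sum_congr rfl fun m _ => ?_
            simp_rw [← Finset.mul_sum]
            rw [← aux_bilin (D2c m) w]
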